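/- Let D be a squarefree positive integer with D ≢ 0 (mod 4), let 𝕀 = ℚ(√−D) be the corresponding imaginary quadratic field and ℤ_𝕀 its ring of integers, and set τ = 1 if D ≡ 1 or 2 (mod 4) and τ = 1/2 if D ≡ 3 (mod 4). Then for any complex numbers Θ₁, …, Θ_m ∈ ℂ and any positive integers H₁, …, H_m there exists a nonzero vector (β₀, β₁, …, β_m) ∈ ℤ_𝕀^{m+1} \ {0} with |β_j| ≤ H_j for all j = 1, …, m satisfying |β₀ + β₁Θ₁ + … + β_mΘ_m| ≤ (2^τ D^{1/4}/√π)^{m+1} · 1/(H₁⋯H_m). -/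

import Mathlib

/-- The generator `h + l√(-D)` of the ring of integers of `ℚ(√(-D))`:
`h = 0, l = 1` if `D ≡ 1, 2 (mod 4)` and `h = l = 1/2` if `D ≡ 3 (mod 4)`. -/
noncomputable def iqGen (D : ℕ) : ℂ :=
  if D % 4 = 3 then (1 + Real.sqrt D * Complex.I) / 2 else Real.sqrt D * Complex.I

/-- The ring of integers `ℤ_𝕀 = ℤ + ℤ(h + l√(-D)) ⊆ ℂ` of the imaginary quadratic
field `𝕀 = ℚ(√(-D))`. -/
noncomputable def iqInt (D : ℕ) : Set ℂ :=
  {z | ∃ p q : ℤ, z = (p : ℂ) + (q : ℂ) * iqGen D}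

open Complex Submodule MeasureTheory Module
open scoped ENNReal NNReal

namespace MinkowskiIQ

lemma iqGen_im (D : ℕ) :
    (iqGen D).im = if D % 4 = 3 then Real.sqrt D / 2 else Real.sqrt D := by
  unfold iqGen
  split
  · simp [Complex.div_im, Complex.add_im, Complex.mul_im]
  · simp

lemma iqGen_im_pos {D : ℕ} (hD0 : 0 < D) : 0 < (iqGen D).im := by
  rw [iqGen_im]
  have : 0 < Real.sqrt D := Real.sqrt_pos.mpr (by exact_mod_cast hD0)
  split <;> positivity

/-- linear equiv of `ℂ` sending `1 ↦ 1`, `I ↦ g`, for `g` with nonzero imaginary part. -/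
noncomputable def genEquiv (g : ℂ) (hg : g.im ≠ 0) : ℂ ≃ₗ[ℝ] ℂ :=
  LinearEquiv.ofLinear
    (Complex.reLm.smulRight 1 + Complex.imLm.smulRight g)
    (Complex.reLm.smulRight 1 +
      Complex.imLm.smulRight (Complex.mk (-g.re / g.im) (1 / g.im)))
    (by
      ext z
      simp only [LinearMap.coe_comp, Function.comp_apply, LinearMap.add_apply,
        LinearMap.smulRight_apply, Complex.reLm_coe, Complex.imLm_coe, LinearMap.id_coe, id_eq,
        smul_eq_mul, Complex.real_smul]
      apply Complex.ext <;>
        simp only [Complex.add_re, Complex.add_im, Complex.mul_re, Complex.mul_im,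
          Complex.ofReal_re, Complex.ofReal_im, Complex.one_re, Complex.one_im] <;>
        field_simp <;> ring)
    (by
      ext z
      simp only [LinearMap.coe_comp, Function.comp_apply, LinearMap.add_apply,
        LinearMap.smulRight_apply, Complex.reLm_coe, Complex.imLm_coe, LinearMap.id_coe, id_eq,
        smul_eq_mul, Complex.real_smul]
      apply Complex.ext <;>
        simp only [Complex.add_re, Complex.add_im, Complex.mul_re, Complex.mul_im,
          Complex.ofReal_re, Complex.ofReal_im, Complex.one_re, Complex.one_im] <;>
        field_simp <;> ring)

lemma genEquiv_apply (g : ℂ) (hg : g.im ≠ 0) (z : ℂ) :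
    genEquiv g hg z = z.re • (1 : ℂ) + z.im • g := by
  simp [genEquiv]

/-- the basis `(1, g)` of `ℂ` over `ℝ`. -/
noncomputable def genBasis (g : ℂ) (hg : g.im ≠ 0) : Basis (Fin 2) ℝ ℂ :=
  Complex.basisOneI.map (genEquiv g hg)

lemma genBasis_apply0 (g : ℂ) (hg : g.im ≠ 0) : genBasis g hg 0 = 1 := by
  simp [genBasis, Basis.map_apply, genEquiv_apply]

lemma genBasis_apply1 (g : ℂ) (hg : g.im ≠ 0) : genBasis g hg 1 = g := by
  simp [genBasis, Basis.map_apply, genEquiv_apply]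

lemma range_genBasis (g : ℂ) (hg : g.im ≠ 0) :
    Set.range (genBasis g hg) = {1, g} := by
  ext y
  constructor
  · rintro ⟨i, rfl⟩
    fin_cases i
    · left; exact genBasis_apply0 g hg
    · right; exact genBasis_apply1 g hg
  · intro h
    simp only [Set.mem_insert_iff, Set.mem_singleton_iff] at h
    rcases h with rfl | rfl
    · exact ⟨0, genBasis_apply0 g hg⟩
    · exact ⟨1, genBasis_apply1 _ _⟩

lemma mem_span_genBasis (g : ℂ) (hg : g.im ≠ 0) (z : ℂ) :
    z ∈ span ℤ (Set.range (genBasis g hg)) ↔ ∃ p q : ℤ, z = (p : ℂ) + (q : ℂ) * g := by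
  rw [range_genBasis, mem_span_pair]
  constructor
  · rintro ⟨p, q, rfl⟩
    exact ⟨p, q, by push_cast [zsmul_eq_mul]; ring⟩
  · rintro ⟨p, q, rfl⟩
    exact ⟨p, q, by push_cast [zsmul_eq_mul]; ring⟩

lemma volume_fd_basisOneI :
    volume (ZSpan.fundamentalDomain Complex.basisOneI) = 1 := by
  have h : ZSpan.fundamentalDomain Complex.basisOneI
      = Complex.measurableEquivPi ⁻¹' (Set.univ.pi fun _ : Fin 2 => Set.Ico (0:ℝ) 1) := by
    ext z
    simp [ZSpan.mem_fundamentalDomain, Complex.measurableEquivPi, Fin.forall_fin_two]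
  rw [h, Complex.volume_preserving_equiv_pi.measure_preimage
    ((MeasurableSet.pi Set.countable_univ fun _ _ => measurableSet_Ico).nullMeasurableSet)]
  simp [MeasureTheory.volume_pi, MeasureTheory.Measure.pi_pi, Real.volume_Ico]

lemma volume_fd_genBasis (g : ℂ) (hg : 0 < g.im) :
    volume (ZSpan.fundamentalDomain (genBasis g hg.ne')) = ENNReal.ofReal g.im := by
  classical
  rw [ZSpan.measure_fundamentalDomain _ _ Complex.basisOneI, volume_fd_basisOneI, mul_one]
  congr 1
  have hdet : Complex.basisOneI.det (genBasis g hg.ne') = g.im := by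
    rw [Basis.det_apply, Matrix.det_fin_two]
    simp [Basis.toMatrix_apply, genBasis_apply0, genBasis_apply1, Complex.coe_basisOneI_repr]
  rw [hdet, abs_of_pos hg]

/-- The product basis of `(Fin (m+1) → ℂ)`. -/
noncomputable def Bpi (b₀ : Basis (Fin 2) ℝ ℂ) (m : ℕ) :
    Basis ((_ : Fin (m+1)) × Fin 2) ℝ (Fin (m+1) → ℂ) :=
  Pi.basis (fun _ => b₀)

lemma mem_span_Bpi {m : ℕ} (b₀ : Basis (Fin 2) ℝ ℂ) (x : Fin (m+1) → ℂ) :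
    x ∈ span ℤ (Set.range (Bpi b₀ m)) ↔ ∀ i, x i ∈ span ℤ (Set.range b₀) := by
  rw [Basis.mem_span_iff_repr_mem]
  simp_rw [Basis.mem_span_iff_repr_mem]
  constructor
  · intro h i j; exact h ⟨i, j⟩
  · rintro h ⟨i, j⟩; exact h i j

lemma fd_Bpi {m : ℕ} (b₀ : Basis (Fin 2) ℝ ℂ) :
    ZSpan.fundamentalDomain (Bpi b₀ m) =
      Set.univ.pi fun _ : Fin (m+1) => ZSpan.fundamentalDomain b₀ := by
  ext x
  simp only [ZSpan.mem_fundamentalDomain, Set.mem_pi, Set.mem_univ, forall_true_left]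
  constructor
  · intro h i j; exact h ⟨i, j⟩
  · rintro h ⟨i, j⟩; exact h i j

lemma volume_fd_Bpi {m : ℕ} (b₀ : Basis (Fin 2) ℝ ℂ) :
    volume (ZSpan.fundamentalDomain (Bpi b₀ m)) =
      (volume (ZSpan.fundamentalDomain b₀)) ^ (m + 1) := by
  rw [fd_Bpi, volume_pi, Measure.pi_pi]
  simp

/-- The convex body. -/
noncomputable def sSet (m : ℕ) (Θ : Fin m → ℂ) (ε : ℝ) (H : Fin m → ℝ) :
    Set (Fin (m+1) → ℂ) :=
  {x | ‖x 0 + ∑ j, x j.succ * Θ j‖ ≤ ε ∧ ∀ j, ‖x j.succ‖ ≤ H j}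

lemma volume_sSet {m : ℕ} (Θ : Fin m → ℂ) (ε : ℝ) (H : Fin m → ℝ) :
    volume (sSet m Θ ε H) =
      (ENNReal.ofReal ε ^ 2 * NNReal.pi) * ∏ j, (ENNReal.ofReal (H j) ^ 2 * NNReal.pi) := by
  classical
  set L : (Fin m → ℂ) → ℂ := fun w => ∑ j, w j * Θ j with hLdef
  have hLmeas : Measurable L :=
    Finset.measurable_sum _ fun j _ => by fun_prop
  set e := MeasurableEquiv.piFinSuccAbove (fun _ : Fin (m+1) => ℂ) 0 with he
  have hem : MeasurePreserving e volume
      ((volume : Measure ℂ).prod (volume : Measure (Fin m → ℂ))) := by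
    have h := measurePreserving_piFinSuccAbove (fun _ : Fin (m+1) => (volume : Measure ℂ)) 0
    simpa only [← volume_pi] using h
  set T₃ : (Fin m → ℂ) × ℂ → (Fin m → ℂ) × ℂ := fun p => (p.1, p.2 + L p.1) with hT3def
  have hT₃ : MeasurePreserving T₃ (volume.prod volume) (volume.prod volume) := by
    refine MeasurePreserving.skew_product (g := fun w z => z + L w) (MeasurePreserving.id _)
      (measurable_snd.add (hLmeas.comp measurable_fst)) (Filter.Eventually.of_forall fun w => ?_)
    exact map_add_right_eq_self volume (L w)
  set T'' : ℂ × (Fin m → ℂ) → ℂ × (Fin m → ℂ) := fun p => (p.1 + L p.2, p.2) with hT2def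
  have hT'' : MeasurePreserving T'' (volume.prod volume) (volume.prod volume) := by
    have : T'' = Prod.swap ∘ T₃ ∘ Prod.swap := rfl
    rw [this]
    exact Measure.measurePreserving_swap.comp (hT₃.comp Measure.measurePreserving_swap)
  set Q : Set (ℂ × (Fin m → ℂ)) :=
    Metric.closedBall 0 ε ×ˢ Set.univ.pi fun j => Metric.closedBall (0:ℂ) (H j) with hQdef
  have hQm : MeasurableSet Q :=
    measurableSet_closedBall.prod (MeasurableSet.pi Set.countable_univ
      fun _ _ => measurableSet_closedBall)
  have hs : sSet m Θ ε H = e ⁻¹' (T'' ⁻¹' Q) := by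
    ext x
    simp only [sSet, Set.mem_setOf_eq, Set.mem_preimage, he,
      MeasurableEquiv.piFinSuccAbove, MeasurableEquiv.coe_mk, Equiv.coe_fn_mk, hT2def, hQdef,
      Set.mem_prod, Set.mem_pi, Set.mem_univ, forall_true_left, Metric.mem_closedBall,
      Complex.dist_eq, sub_zero]
    constructor
    · rintro ⟨h1, h2⟩
      constructor
      · simpa [Fin.removeNth, Fin.zero_succAbove, hLdef, Fin.tail] using h1
      · intro j; simpa [Fin.removeNth, Fin.zero_succAbove, Fin.tail] using h2 j
    · rintro ⟨h1, h2⟩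
      constructor
      · simpa [Fin.removeNth, Fin.zero_succAbove, hLdef, Fin.tail] using h1
      · intro j; simpa [Fin.removeNth, Fin.zero_succAbove, Fin.tail] using h2 j
  rw [hs, hem.measure_preimage ((hT''.measurable hQm).nullMeasurableSet),
    hT''.measure_preimage hQm.nullMeasurableSet, hQdef, Measure.prod_prod,
    Complex.volume_closedBall, volume_pi, Measure.pi_pi]
  simp_rw [Complex.volume_closedBall]

lemma abs_convex_aux {a b : ℝ} {u v : ℂ} {r : ℝ} (ha : 0 ≤ a) (hb : 0 ≤ b)
    (hab : a + b = 1) (hu : ‖u‖ ≤ r) (hv : ‖v‖ ≤ r) :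
    ‖(a : ℂ) * u + (b : ℂ) * v‖ ≤ r := by
  calc ‖(a : ℂ) * u + (b : ℂ) * v‖
      ≤ ‖(a : ℂ) * u‖ + ‖(b : ℂ) * v‖ := norm_add_le _ _
    _ = a * ‖u‖ + b * ‖v‖ := by
        rw [norm_mul, norm_mul, Complex.norm_of_nonneg ha, Complex.norm_of_nonneg hb]
    _ ≤ a * r + b * r := by gcongr
    _ = r := by rw [← add_mul, hab, one_mul]

lemma sSet_linear (m : ℕ) (Θ : Fin m → ℂ) (a b : ℝ) (x y : Fin (m+1) → ℂ) :
    (a • x + b • y) 0 + ∑ j, (a • x + b • y) j.succ * Θ j =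
      (a : ℂ) * (x 0 + ∑ j, x j.succ * Θ j) + (b : ℂ) * (y 0 + ∑ j, y j.succ * Θ j) := by
  simp only [Pi.add_apply, Pi.smul_apply, Complex.real_smul, add_mul]
  rw [Finset.sum_add_distrib, mul_add, mul_add, Finset.mul_sum, Finset.mul_sum]
  simp_rw [mul_assoc]
  ring

lemma sSet_convex (m : ℕ) (Θ : Fin m → ℂ) (ε : ℝ) (H : Fin m → ℝ) :
    Convex ℝ (sSet m Θ ε H) := by
  intro x hx y hy a b ha hb hab
  refine ⟨?_, fun j => ?_⟩
  · rw [sSet_linear]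
    exact abs_convex_aux ha hb hab hx.1 hy.1
  · have : (a • x + b • y) j.succ = (a : ℂ) * x j.succ + (b : ℂ) * y j.succ := by
      simp [Complex.real_smul]
    rw [this]
    exact abs_convex_aux ha hb hab (hx.2 j) (hy.2 j)

lemma sSet_symm (m : ℕ) (Θ : Fin m → ℂ) (ε : ℝ) (H : Fin m → ℝ) :
    ∀ x ∈ sSet m Θ ε H, -x ∈ sSet m Θ ε H := by
  rintro x ⟨h1, h2⟩
  constructor
  · have : (-x) 0 + ∑ j, (-x) j.succ * Θ j = -(x 0 + ∑ j, x j.succ * Θ j) := by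
      simp [neg_add, Finset.sum_neg_distrib, add_comm]
    rw [this, norm_neg]
    exact h1
  · intro j
    simpa using h2 j

lemma sSet_isClosed (m : ℕ) (Θ : Fin m → ℂ) (ε : ℝ) (H : Fin m → ℝ) :
    IsClosed (sSet m Θ ε H) := by
  have hc : Continuous fun x : Fin (m+1) → ℂ => ‖x 0 + ∑ j, x j.succ * Θ j‖ :=
    continuous_norm.comp ((continuous_apply 0).add
      (continuous_finset_sum _ fun j _ => (continuous_apply j.succ).mul continuous_const))
  have : sSet m Θ ε H =
      {x : Fin (m+1) → ℂ | ‖x 0 + ∑ j, x j.succ * Θ j‖ ≤ ε} ∩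
      ⋂ j, {x : Fin (m+1) → ℂ | ‖x j.succ‖ ≤ H j} := by
    ext x; simp [sSet, Set.mem_iInter]
  rw [this]
  exact (isClosed_le hc continuous_const).inter (isClosed_iInter fun j =>
    isClosed_le (continuous_norm.comp (continuous_apply j.succ)) continuous_const)

lemma sSet_isCompact (m : ℕ) (Θ : Fin m → ℂ) (ε : ℝ) (H : Fin m → ℝ)
    (hε : 0 ≤ ε) (hH : ∀ j, 0 ≤ H j) :
    IsCompact (sSet m Θ ε H) := by
  set R : ℝ := ε + ∑ j, H j * (1 + ‖Θ j‖) with hR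
  have hterm : ∀ j, 0 ≤ H j * (1 + ‖Θ j‖) := by
    intro j
    have := norm_nonneg (Θ j)
    have := hH j
    positivity
  have hR0 : 0 ≤ R := by
    have : 0 ≤ ∑ j, H j * (1 + ‖Θ j‖) := Finset.sum_nonneg fun j _ => hterm j
    positivity
  have hsub : sSet m Θ ε H ⊆ Metric.closedBall 0 R := by
    rintro x ⟨h1, h2⟩
    rw [Metric.mem_closedBall, dist_zero_right]
    rw [pi_norm_le_iff_of_nonneg hR0]
    intro i
    induction i using Fin.cases with
    | zero =>
        have habs : ‖x 0‖ ≤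
            ‖x 0 + ∑ j, x j.succ * Θ j‖ + ‖∑ j, x j.succ * Θ j‖ := by
          calc ‖x 0‖
              = ‖(x 0 + ∑ j, x j.succ * Θ j) + -(∑ j, x j.succ * Θ j)‖ := by
                ring_nf
            _ ≤ _ := by
                rw [← norm_neg (∑ j, x j.succ * Θ j)]
                exact norm_add_le _ _
        have hsum : ‖∑ j, x j.succ * Θ j‖ ≤ ∑ j, H j * (1 + ‖Θ j‖) := by
          calc ‖∑ j, x j.succ * Θ j‖ ≤ ∑ j, ‖x j.succ * Θ j‖ :=
              norm_sum_le _ _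
            _ ≤ ∑ j, H j * (1 + ‖Θ j‖) := by
                refine Finset.sum_le_sum fun j _ => ?_
                rw [norm_mul]
                have h3 : ‖x j.succ‖ * ‖Θ j‖ ≤ H j * ‖Θ j‖ :=
                  mul_le_mul_of_nonneg_right (h2 j) (norm_nonneg _)
                nlinarith [hH j, norm_nonneg (Θ j)]
        calc ‖x 0‖ ≤ _ := habs
          _ ≤ ε + ∑ j, H j * (1 + ‖Θ j‖) := add_le_add h1 hsum
          _ = R := hR.symm
    | succ j =>
        calc ‖x j.succ‖ ≤ H j := h2 j
          _ ≤ H j * (1 + ‖Θ j‖) := by nlinarith [hH j, norm_nonneg (Θ j)]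
          _ ≤ ∑ j', H j' * (1 + ‖Θ j'‖) :=
              Finset.single_le_sum (fun j' _ => hterm j') (Finset.mem_univ j)
          _ ≤ R := by rw [hR]; nlinarith [hε]
  exact (isCompact_closedBall (0 : Fin (m+1) → ℂ) R).of_isClosed_subset
    (sSet_isClosed m Θ ε H) hsub

end MinkowskiIQ

open MinkowskiIQ

theorem minkowski_linear_form_imaginary_quadratic
    (D : ℕ) (hD : Squarefree D) (hD0 : 0 < D) (hD4 : D % 4 ≠ 0)
    (m : ℕ) (Θ : Fin m → ℂ) (Hs : Fin m → ℕ) (hHs : ∀ j, 1 ≤ Hs j) :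
    ∃ β : Fin (m + 1) → ℂ,
      (∀ i, β i ∈ iqInt D) ∧ β ≠ 0 ∧
      (∀ j : Fin m, ‖β j.succ‖ ≤ Hs j) ∧
      ‖β 0 + ∑ j : Fin m, β j.succ * Θ j‖ ≤
        ((2 : ℝ) ^ (if D % 4 = 3 then (1 : ℝ) / 2 else 1) * (D : ℝ) ^ ((1 : ℝ) / 4)
            / Real.sqrt Real.pi) ^ (m + 1) * (1 / ∏ j : Fin m, (Hs j : ℝ)) := by
  classical
  have hD0' : (0:ℝ) < (D:ℝ) := by exact_mod_cast hD0
  have hgim : 0 < (iqGen D).im := iqGen_im_pos hD0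
  set base : ℝ := (2:ℝ) ^ (if D % 4 = 3 then (1:ℝ)/2 else 1) * (D:ℝ) ^ ((1:ℝ)/4)
      / Real.sqrt Real.pi with hbasedef
  have hbasepos : 0 < base := by
    have h2 : (0:ℝ) < (2:ℝ) ^ (if D % 4 = 3 then (1:ℝ)/2 else 1) :=
      Real.rpow_pos_of_pos two_pos _
    have h4 : (0:ℝ) < (D:ℝ) ^ ((1:ℝ)/4) := Real.rpow_pos_of_pos hD0' _
    have hp : 0 < Real.sqrt Real.pi := Real.sqrt_pos.mpr Real.pi_pos
    rw [hbasedef]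
    positivity
  have hHpos : ∀ j, (0:ℝ) < (Hs j : ℝ) := fun j => by exact_mod_cast hHs j
  have hHprod : (0:ℝ) < ∏ j, (Hs j : ℝ) := Finset.prod_pos fun j _ => hHpos j
  set ε : ℝ := base ^ (m+1) * (1 / ∏ j, (Hs j : ℝ)) with hεdef
  have hε : 0 < ε := by
    rw [hεdef]; positivity
  -- the key real identity
  have hbase2 : base ^ 2 * Real.pi = 4 * (iqGen D).im := by
    have hsD : Real.sqrt (D:ℝ) = (D:ℝ) ^ ((1:ℝ)/2) := Real.sqrt_eq_rpow _
    have hD14 : ((D:ℝ) ^ ((1:ℝ)/4))^2 = Real.sqrt (D:ℝ) := by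
      rw [← Real.rpow_natCast ((D:ℝ) ^ ((1:ℝ)/4)) 2, ← Real.rpow_mul hD0'.le, hsD]
      norm_num
    have hpisq : (Real.sqrt Real.pi)^2 = Real.pi := Real.sq_sqrt Real.pi_pos.le
    rw [hbasedef, div_pow, mul_pow, hD14, hpisq, div_mul_cancel₀ _ Real.pi_pos.ne']
    rw [iqGen_im]
    by_cases h : D % 4 = 3
    · rw [if_pos h, if_pos h]
      have h22 : ((2:ℝ) ^ ((1:ℝ)/2))^2 = 2 := by
        rw [← Real.rpow_natCast ((2:ℝ) ^ ((1:ℝ)/2)) 2, ← Real.rpow_mul (by norm_num)]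
        norm_num
      rw [h22]; ring
    · rw [if_neg h, if_neg h, Real.rpow_one]; ring
  -- set up the lattice
  set b₀ : Basis (Fin 2) ℝ ℂ := genBasis (iqGen D) hgim.ne' with hb0
  set B := Bpi b₀ m with hB
  haveI : IsZLattice ℝ (span ℤ (Set.range B)) := inferInstance
  haveI : Countable (span ℤ (Set.range B)).toAddSubgroup :=
    inferInstanceAs (Countable (span ℤ (Set.range B)))
  have fund : IsAddFundamentalDomain (span ℤ (Set.range B)).toAddSubgroup
      (ZSpan.fundamentalDomain B) volume := ZSpan.isAddFundamentalDomain' B volume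
  have hrank : finrank ℝ (Fin (m+1) → ℂ) = 2 * (m+1) := by
    rw [Module.finrank_pi_fintype]
    simp [Complex.finrank_real_complex, Finset.sum_const, Fintype.card_fin, mul_comm]
  have hvolF : volume (ZSpan.fundamentalDomain B) = ENNReal.ofReal ((iqGen D).im) ^ (m+1) := by
    rw [hB, volume_fd_Bpi, hb0, volume_fd_genBasis _ hgim]
  -- measure inequality
  have hle : volume (ZSpan.fundamentalDomain B) * 2 ^ finrank ℝ (Fin (m+1) → ℂ)
      ≤ volume (sSet m Θ ε fun j => (Hs j : ℝ)) := by
    have hL : volume (ZSpan.fundamentalDomain B) * 2 ^ finrank ℝ (Fin (m+1) → ℂ)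
        = ENNReal.ofReal ((4 * (iqGen D).im) ^ (m+1)) := by
      rw [hvolF, hrank, pow_mul, ← mul_pow]
      rw [ENNReal.ofReal_pow (by positivity)]
      congr 1
      rw [ENNReal.ofReal_mul (by norm_num : (0:ℝ) ≤ 4), mul_comm]
      congr 1
      rw [ENNReal.ofReal_ofNat]
      norm_num
    have hR : volume (sSet m Θ ε fun j => (Hs j : ℝ))
        = ENNReal.ofReal ((ε^2 * Real.pi) * ∏ j, ((Hs j : ℝ)^2 * Real.pi)) := by
      rw [volume_sSet]
      have hpi : (NNReal.pi : ℝ≥0∞) = ENNReal.ofReal Real.pi := by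
        rw [← ENNReal.ofReal_coe_nnreal, NNReal.coe_real_pi]
      have h1 : ∀ j : Fin m, (ENNReal.ofReal ((Hs j : ℝ)))^2 * (NNReal.pi : ℝ≥0∞)
          = ENNReal.ofReal ((Hs j : ℝ)^2 * Real.pi) := fun j => by
        rw [hpi, ← ENNReal.ofReal_pow (hHpos j).le, ← ENNReal.ofReal_mul (by positivity)]
      have h0 : (ENNReal.ofReal ε)^2 * (NNReal.pi : ℝ≥0∞) = ENNReal.ofReal (ε^2 * Real.pi) := by
        rw [hpi, ← ENNReal.ofReal_pow hε.le, ← ENNReal.ofReal_mul (by positivity)]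
      rw [h0]
      simp_rw [h1]
      rw [← ENNReal.ofReal_prod_of_nonneg (fun j _ => by positivity),
        ← ENNReal.ofReal_mul (by positivity)]
    rw [hL, hR]
    apply le_of_eq
    congr 1
    have hstep : (4 * (iqGen D).im) ^ (m+1) = (base^2 * Real.pi) ^ (m+1) := by
      rw [hbase2]
    rw [hstep, mul_pow, ← pow_mul]
    have hprodsq : ∏ j, ((Hs j : ℝ)^2 * Real.pi) = (∏ j, (Hs j : ℝ))^2 * Real.pi ^ m := by
      rw [Finset.prod_mul_distrib, Finset.prod_const, ← Finset.prod_pow]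
      simp [Fintype.card_fin]
    rw [hprodsq, hεdef]
    field_simp
    ring
  -- apply Minkowski
  obtain ⟨x, hx0, hxs⟩ := exists_ne_zero_mem_lattice_of_measure_mul_two_pow_le_measure
    fund (sSet_symm m Θ ε _) (sSet_convex m Θ ε _)
    (sSet_isCompact m Θ ε _ hε.le (fun j => (hHpos j).le)) hle
  refine ⟨(x : Fin (m+1) → ℂ), ?_, ?_, ?_, ?_⟩
  · intro i
    have hx0m : (x : Fin (m+1) → ℂ) ∈ span ℤ (Set.range (Bpi b₀ m)) :=
      (Submodule.mem_toAddSubgroup _).mp (SetLike.coe_mem x)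
    have h2 : (x : Fin (m+1) → ℂ) i ∈ span ℤ (Set.range (genBasis (iqGen D) hgim.ne')) :=
      (mem_span_Bpi b₀ _).mp hx0m i
    exact (mem_span_genBasis _ _ _).mp h2
  · intro h
    exact hx0 (by exact_mod_cast Subtype.ext h)
  · exact hxs.2
  · exact hxs.1
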